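/- (Freedman's inequality.) Let X_0, X_1, …, X_n be a real-valued martingale with respect to a filtration (F_i)_{i=0,…,n} on a probability space, with X_0 = 0. Suppose there exist M > 0 and σ² > 0 such that, almost surely, |X_i − X_{i−1}| ≤ M for every 1 ≤ i ≤ n, and the predictable quadratic variation satisfies ∑_{j=1}^i E[(X_j − X_{j−1})² | F_{j−1}] ≤ σ² for every 1 ≤ i ≤ n. Then for every λ > 0, P(max_{i∈[n]} |X_i| > λ) ≤ 2·exp(−(λ²/2)/(σ² + M·λ/3)). -/

import Mathlib

open MeasureTheory Finset

lemma fr_exp_tsum (x : ℝ) : Real.exp x = ∑' n : ℕ, x^n / (Nat.factorial n) := by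
  rw [Real.exp_eq_exp_ℝ, NormedSpace.exp_eq_tsum_div]

lemma fr_fact_ge (n : ℕ) : 2 * 3^n ≤ Nat.factorial (n+2) := by
  induction n with
  | zero => simp [Nat.factorial]
  | succ k ih =>
    have : Nat.factorial (k+3) = (k+3) * Nat.factorial (k+2) := rfl
    rw [this, pow_succ]
    calc 2 * (3^k * 3) = 3 * (2 * 3^k) := by ring
    _ ≤ 3 * Nat.factorial (k+2) := by omega
    _ ≤ (k+3) * Nat.factorial (k+2) := Nat.mul_le_mul_right _ (by omega)

lemma fr_exp_quad_neg (u : ℝ) (hu : u ≤ 0) : Real.exp u ≤ 1 + u + u^2/2 := by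
  have h : AntitoneOn (fun x : ℝ => 1 + x + x^2/2 - Real.exp x) (Set.Iic 0) := by
    apply antitoneOn_of_deriv_nonpos (convex_Iic 0)
    · fun_prop
    · intro x hx
      exact (((differentiable_const 1).add differentiable_fun_id).add
        ((differentiable_pow 2).div_const 2)).sub Real.differentiable_exp |>.differentiableAt.differentiableWithinAt
    · intro x hx
      have : deriv (fun x : ℝ => 1 + x + x^2/2 - Real.exp x) x = 1 + x - Real.exp x := by
        have h1 : HasDerivAt (fun x : ℝ => 1 + x + x^2/2 - Real.exp x) (0 + 1 + (2*x^1)/2 - Real.exp x) x := by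
          exact (((hasDerivAt_const x 1).add (hasDerivAt_id x)).add
            ((hasDerivAt_pow 2 x).div_const 2)).sub (Real.hasDerivAt_exp x)
        have := h1.deriv
        rw [this]; ring
      rw [this]
      nlinarith [Real.add_one_le_exp x]
  have h0 := h (Set.mem_Iic.2 hu) (Set.mem_Iic.2 le_rfl) hu
  simp at h0
  nlinarith [h0]

lemma fr_key_ineq (u v : ℝ) (h : |u| ≤ v) (hv : v < 3) :
    Real.exp u ≤ 1 + u + u^2 / (2*(1 - v/3)) := by
  have hv0 : 0 ≤ v := le_trans (abs_nonneg u) h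
  have hden : 0 < 1 - v/3 := by linarith
  rcases le_or_gt u 0 with hu | hu
  · have : u^2/2 ≤ u^2 / (2*(1-v/3)) := by
      apply div_le_div_of_nonneg_left (sq_nonneg u) (by linarith)
      nlinarith
    linarith [fr_exp_quad_neg u hu]
  · have hu0 : 0 ≤ u := hu.le
    have huv : u ≤ v := (le_abs_self u).trans h
    have hsum2 : Summable (fun n : ℕ => u^2/2 * (v/3)^n) :=
      (summable_geometric_of_lt_one (by positivity) (by linarith)).mul_left _
    have hterm : ∀ n : ℕ, u^(n+2) / (Nat.factorial (n+2)) ≤ u^2/2 * (v/3)^n := by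
      intro n
      have h2 : u^n ≤ v^n := pow_le_pow_left₀ hu0 huv n
      have h3 : (2 * 3^n : ℝ) ≤ (Nat.factorial (n+2) : ℝ) := by exact_mod_cast fr_fact_ge n
      have h1 : u^(n+2) = u^2 * u^n := by ring
      rw [h1, div_le_iff₀ (by positivity), div_pow]
      calc u^2*u^n = (u^2*u^n*(2*3^n))/(2*3^n) := by field_simp
      _ ≤ (u^2*v^n*(Nat.factorial (n+2)))/(2*3^n) := by gcongr
      _ = u^2/2 * (v^n/3^n) * (Nat.factorial (n+2)) := by field_simp
    have hsum1 : Summable (fun n : ℕ => u^(n+2) / (Nat.factorial (n+2))) := by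
      apply Summable.of_nonneg_of_le (fun n => by positivity) hterm hsum2
    have hexp : Real.exp u = 1 + u + ∑' n : ℕ, u^(n+2) / (Nat.factorial (n+2)) := by
      rw [fr_exp_tsum]
      have hs : Summable (fun n : ℕ => u^n / (Nat.factorial n)) := Real.summable_pow_div_factorial u
      have hs1 : Summable (fun b : ℕ => u^(b+1)/(Nat.factorial (b+1))) := by
        simpa [Function.comp_def] using hs.comp_injective (add_left_injective 1)
      rw [Summable.tsum_eq_zero_add hs, Summable.tsum_eq_zero_add hs1]
      simp [Nat.factorial]
      rw [← add_assoc]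
    have hbound : ∑' n : ℕ, u^(n+2) / (Nat.factorial (n+2)) ≤ u^2 / (2*(1-v/3)) := by
      calc ∑' n : ℕ, u^(n+2) / (Nat.factorial (n+2)) ≤ ∑' n : ℕ, u^2/2 * (v/3)^n :=
        Summable.tsum_le_tsum hterm hsum1 hsum2
      _ = u^2/2 * (1 - v/3)⁻¹ := by
          rw [tsum_mul_left, tsum_geometric_of_lt_one (by positivity) (by linarith)]
      _ = u^2 / (2*(1-v/3)) := by field_simp
    rw [hexp]; linarith

set_option maxHeartbeats 2000000 in
lemma freedman_one_sided
    (Ω : Type) (m0 : MeasurableSpace Ω) (μ : Measure Ω) [IsProbabilityMeasure μ]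
    (n : ℕ) (ℱ : Filtration ℕ m0) (X : ℕ → Ω → ℝ) (M σ2 : ℝ)
    (hadapted : ∀ i ≤ n, Measurable[ℱ i] (X i))
    (hint : ∀ i ≤ n, Integrable (X i) μ)
    (hmart : ∀ i < n, μ[X (i + 1)|ℱ i] =ᵐ[μ] X i)
    (hX0 : ∀ ω, X 0 ω = 0)
    (hM : 0 < M) (hσ2 : 0 < σ2)
    (hdiff : ∀ i ∈ Icc 1 n, ∀ᵐ ω ∂μ, |X i ω - X (i - 1) ω| ≤ M)
    (hvar : ∀ i ∈ Icc 1 n, ∀ᵐ ω ∂μ,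
      (∑ j ∈ Icc 1 i, (μ[fun ω' => (X j ω' - X (j - 1) ω') ^ 2|ℱ (j - 1)]) ω) ≤ σ2)
    (l : ℝ) (hl : 0 < l) :
    μ {ω | ∃ i ∈ Icc 1 n, l < X i ω} ≤
      ENNReal.ofReal (Real.exp (-(l ^ 2 / 2) / (σ2 + M * l / 3))) := by
  classical
  have hd : (0:ℝ) < σ2 + M * l / 3 := by nlinarith
  set θ : ℝ := l / (σ2 + M * l / 3) with hθ_def
  have hθ : 0 < θ := div_pos hl hd
  have hθM3 : θ * M < 3 := by
    rw [hθ_def, div_mul_eq_mul_div, div_lt_iff₀ hd]; nlinarith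
  have h1mθ : 0 < 1 - θ * M / 3 := by linarith
  set c : ℝ := θ^2 / (2 * (1 - θ * M / 3)) with hc_def
  have hc : 0 ≤ c := by positivity
  set V : ℕ → Ω → ℝ := fun i ω =>
    ∑ j ∈ Icc 1 i, (μ[fun ω' => (X j ω' - X (j - 1) ω') ^ 2|ℱ (j - 1)]) ω with hV_def
  set S : ℕ → Ω → ℝ := fun i ω => Real.exp (θ * X i ω - c * V i ω) with hS_def
  have hSpos : ∀ i ω, 0 < S i ω := fun i ω => Real.exp_pos _
  have hV0 : ∀ ω, V 0 ω = 0 := by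
    intro ω
    show (∑ j ∈ Icc 1 0, (μ[fun ω' => (X j ω' - X (j - 1) ω') ^ 2|ℱ (j - 1)]) ω) = 0
    rw [show (Icc 1 0 : Finset ℕ) = ∅ from rfl, Finset.sum_empty]
  have hS0 : ∀ ω, S 0 ω = 1 := by
    intro ω
    show Real.exp (θ * X 0 ω - c * V 0 ω) = 1
    rw [hX0 ω, hV0 ω]
    simp
  -- measurability of V
  have hVmeas : ∀ i k : ℕ, i ≤ k + 1 → StronglyMeasurable[ℱ k] (V i) := by
    intro i k hik
    rw [hV_def]
    apply Finset.stronglyMeasurable_fun_sum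
    intro j hj
    have hjk : j - 1 ≤ k := by simp only [mem_Icc] at hj; omega
    exact stronglyMeasurable_condExp.mono (ℱ.mono hjk)
  have hSmeasF : ∀ i, i ≤ n → StronglyMeasurable[ℱ i] (S i) := by
    intro i hi
    rw [hS_def]
    exact Real.continuous_exp.comp_stronglyMeasurable
      ((stronglyMeasurable_const.mul (hadapted i hi).stronglyMeasurable).sub
        (stronglyMeasurable_const.mul (hVmeas i i (by omega))))
  -- a.e. bounds
  have hXbd : ∀ i, i ≤ n → ∀ᵐ ω ∂μ, |X i ω| ≤ i * M := by
    intro i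
    induction i with
    | zero => intro _; filter_upwards with ω; simp [hX0]
    | succ k ih =>
      intro hk
      have h2 := hdiff (k+1) (by simp only [mem_Icc]; omega)
      filter_upwards [ih (by omega), h2] with ω h1 h2
      simp only [Nat.add_sub_cancel] at h2
      have habs : |X (k+1) ω| ≤ |X k ω| + |X (k+1) ω - X k ω| := by
        have := abs_add_le (X k ω) (X (k+1) ω - X k ω)
        simpa using this
      have : |X (k+1) ω| ≤ k * M + M := by linarith
      calc |X (k+1) ω| ≤ k * M + M := this
      _ = (k+1 : ℕ) * M := by push_cast; ring
  have hVnonneg : ∀ i, ∀ᵐ ω ∂μ, 0 ≤ V i ω := by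
    intro i
    have h : ∀ j, ∀ᵐ ω ∂μ, 0 ≤ (μ[fun ω' => (X j ω' - X (j - 1) ω') ^ 2|ℱ (j - 1)]) ω :=
      fun j => condExp_nonneg (Filter.Eventually.of_forall fun ω => sq_nonneg _)
    have h2 : ∀ᵐ ω ∂μ, ∀ j ∈ Icc 1 i, 0 ≤ (μ[fun ω' => (X j ω' - X (j - 1) ω') ^ 2|ℱ (j - 1)]) ω :=
      (Filter.eventually_all_finset _).2 fun j _ => h j
    filter_upwards [h2] with ω hω
    exact Finset.sum_nonneg hω
  have hSbd : ∀ i, i ≤ n → ∀ᵐ ω ∂μ, S i ω ≤ Real.exp (θ * (i * M)) := by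
    intro i hi
    filter_upwards [hXbd i hi, hVnonneg i] with ω h1 h2
    rw [hS_def]
    apply Real.exp_le_exp.2
    have hX' : X i ω ≤ i * M := (abs_le.1 h1).2
    nlinarith [mul_nonneg hc h2]
  have hSint : ∀ i, i ≤ n → Integrable (S i) μ := by
    intro i hi
    refine (integrable_const (Real.exp (θ * (i * M)))).mono'
      (((hSmeasF i hi).mono (ℱ.le i)).aestronglyMeasurable) ?_
    filter_upwards [hSbd i hi] with ω h
    rw [Real.norm_eq_abs, abs_of_pos (hSpos i ω)]; exact h
  -- the supermartingale step
  have hstep : ∀ i, i + 1 ≤ n → (μ[S (i+1)|ℱ i]) ≤ᵐ[μ] S i := by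
    intro i hin
    have hin' : i ≤ n := by omega
    have hDdiff : ∀ᵐ ω ∂μ, |X (i+1) ω - X i ω| ≤ M := by
      have := hdiff (i+1) (by simp only [mem_Icc]; omega)
      simpa using this
    have hXi1m : Measurable (X (i+1)) := (hadapted (i+1) hin).le (ℱ.le (i+1))
    have hXim : Measurable (X i) := (hadapted i hin').le (ℱ.le i)
    have hDm : Measurable (fun ω => X (i+1) ω - X i ω) := hXi1m.sub hXim
    have hDint : Integrable (fun ω => X (i+1) ω - X i ω) μ := (hint (i+1) hin).sub (hint i hin')
    have hD2int : Integrable (fun ω => (X (i+1) ω - X i ω)^2) μ := by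
      refine (integrable_const (M^2)).mono' ((hDm.pow_const 2).aestronglyMeasurable) ?_
      filter_upwards [hDdiff] with ω h
      rw [Real.norm_eq_abs, abs_of_nonneg (sq_nonneg _), ← sq_abs]
      exact pow_le_pow_left₀ (abs_nonneg _) h 2
    -- W : conditional variance increment
    have hWnonneg : ∀ᵐ ω ∂μ, 0 ≤ (μ[fun ω' => (X (i+1) ω' - X i ω')^2|ℱ i]) ω :=
      condExp_nonneg (Filter.Eventually.of_forall fun ω => sq_nonneg _)
    have hVsucc : ∀ ω, V (i+1) ω = V i ω + (μ[fun ω' => (X (i+1) ω' - X i ω')^2|ℱ i]) ω := by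
      intro ω
      show (∑ j ∈ Icc 1 (i+1), (μ[fun ω' => (X j ω' - X (j - 1) ω') ^ 2|ℱ (j - 1)]) ω) = _
      rw [← Finset.insert_Icc_right_eq_Icc_add_one (by omega : 1 ≤ i + 1), Finset.sum_insert (by simp)]
      simp only [Nat.add_sub_cancel]
      rw [hV_def]
      ring
    -- split S (i+1) = G * E
    have hGE : S (i+1) = (fun ω => Real.exp (θ * X i ω - c * V (i+1) ω)) *
        (fun ω => Real.exp (θ * (X (i+1) ω - X i ω))) := by
      funext ω
      show Real.exp (θ * X (i+1) ω - c * V (i+1) ω) = _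
      rw [Pi.mul_apply, ← Real.exp_add]
      ring_nf
    have hGmeas : StronglyMeasurable[ℱ i] (fun ω => Real.exp (θ * X i ω - c * V (i+1) ω)) :=
      Real.continuous_exp.comp_stronglyMeasurable
        ((stronglyMeasurable_const.mul (hadapted i hin').stronglyMeasurable).sub
          (stronglyMeasurable_const.mul (hVmeas (i+1) i le_rfl)))
    have hGbd : ∀ᵐ ω ∂μ, ‖Real.exp (θ * X i ω - c * V (i+1) ω)‖ ≤ Real.exp (θ * (i * M)) := by
      filter_upwards [hXbd i hin', hVnonneg (i+1)] with ω h1 h2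
      rw [Real.norm_eq_abs, abs_of_pos (Real.exp_pos _)]
      apply Real.exp_le_exp.2
      have hX' : X i ω ≤ i * M := (abs_le.1 h1).2
      nlinarith [mul_nonneg hc h2]
    have hEint : Integrable (fun ω => Real.exp (θ * (X (i+1) ω - X i ω))) μ := by
      refine (integrable_const (Real.exp (θ * M))).mono'
        (Real.measurable_exp.comp (hDm.const_mul θ)).aestronglyMeasurable ?_
      filter_upwards [hDdiff] with ω h
      rw [Real.norm_eq_abs, abs_of_pos (Real.exp_pos _)]
      apply Real.exp_le_exp.2
      have := (abs_le.1 h).2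
      nlinarith
    have hmul : μ[S (i+1)|ℱ i] =ᵐ[μ]
        (fun ω => Real.exp (θ * X i ω - c * V (i+1) ω)) *
          μ[fun ω => Real.exp (θ * (X (i+1) ω - X i ω))|ℱ i] := by
      rw [hGE]
      exact condExp_stronglyMeasurable_mul_of_bound (ℱ.le i) hGmeas hEint _ hGbd
    -- the quadratic bound on E
    have hQint : Integrable (fun ω => 1 + θ * (X (i+1) ω - X i ω) + c * (X (i+1) ω - X i ω)^2) μ :=
      ((integrable_const 1).add (hDint.const_mul θ)).add (hD2int.const_mul c)
    have hEq : (fun ω => Real.exp (θ * (X (i+1) ω - X i ω))) ≤ᵐ[μ]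
        (fun ω => 1 + θ * (X (i+1) ω - X i ω) + c * (X (i+1) ω - X i ω)^2) := by
      filter_upwards [hDdiff] with ω h
      have hk := fr_key_ineq (θ * (X (i+1) ω - X i ω)) (θ * M)
        (by rw [abs_mul, abs_of_pos hθ]; exact mul_le_mul_of_nonneg_left h hθ.le) hθM3
      calc Real.exp (θ * (X (i+1) ω - X i ω)) ≤ 1 + θ * (X (i+1) ω - X i ω) +
          (θ * (X (i+1) ω - X i ω))^2 / (2 * (1 - θ * M / 3)) := hk
      _ = 1 + θ * (X (i+1) ω - X i ω) + c * (X (i+1) ω - X i ω)^2 := by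
          rw [hc_def]; ring
    have hcondE_le : μ[fun ω => Real.exp (θ * (X (i+1) ω - X i ω))|ℱ i] ≤ᵐ[μ]
        μ[fun ω => 1 + θ * (X (i+1) ω - X i ω) + c * (X (i+1) ω - X i ω)^2|ℱ i] :=
      condExp_mono hEint hQint hEq
    -- compute the condexp of the quadratic
    have hmartD : μ[fun ω => X (i+1) ω - X i ω|ℱ i] =ᵐ[μ] 0 := by
      have h1 : μ[fun ω => X (i+1) ω - X i ω|ℱ i] =ᵐ[μ] μ[X (i+1)|ℱ i] - μ[X i|ℱ i] :=
        condExp_sub (hint (i+1) hin) (hint i hin') (ℱ i)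
      have h2 : μ[X i|ℱ i] = X i :=
        condExp_of_stronglyMeasurable (ℱ.le i) (hadapted i hin').stronglyMeasurable (hint i hin')
      filter_upwards [h1, hmart i (by omega)] with ω hω1 hω2
      simp only [Pi.sub_apply, h2] at hω1
      simp [hω1, hω2]
    have hcondQ : μ[fun ω => 1 + θ * (X (i+1) ω - X i ω) + c * (X (i+1) ω - X i ω)^2|ℱ i] =ᵐ[μ]
        fun ω => 1 + θ * (μ[fun ω' => X (i+1) ω' - X i ω'|ℱ i]) ω +
          c * (μ[fun ω' => (X (i+1) ω' - X i ω')^2|ℱ i]) ω := by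
      have e1 : (fun ω => 1 + θ * (X (i+1) ω - X i ω) + c * (X (i+1) ω - X i ω)^2) =
          (fun _ => (1:ℝ)) + (θ • (fun ω => X (i+1) ω - X i ω) +
            c • (fun ω => (X (i+1) ω - X i ω)^2)) := by
        funext ω; simp [smul_eq_mul]; ring
      rw [e1]
      have h2 : Integrable (θ • (fun ω => X (i+1) ω - X i ω) +
          c • (fun ω => (X (i+1) ω - X i ω)^2)) μ := (hDint.smul θ).add (hD2int.smul c)
      refine (condExp_add (integrable_const 1) h2 (ℱ i)).trans ?_
      have h3 := condExp_add (μ := μ) (m := ℱ i) (hDint.smul θ) (hD2int.smul c)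
      have h4 := condExp_smul (μ := μ) (m := ℱ i) θ (fun ω => X (i+1) ω - X i ω)
      have h5 := condExp_smul (μ := μ) (m := ℱ i) c (fun ω => (X (i+1) ω - X i ω)^2)
      have h6 : μ[fun _ => (1:ℝ)|ℱ i] = fun _ => (1:ℝ) := condExp_const (ℱ.le i) 1
      filter_upwards [h3, h4, h5] with ω hω3 hω4 hω5
      simp only [Pi.add_apply, h6, Pi.smul_apply, smul_eq_mul] at *
      rw [hω3, hω4, hω5]
      ring
    -- put everything together
    filter_upwards [hmul, hcondE_le, hcondQ, hmartD, hWnonneg] with ω h1 h2 h3 h4 h5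
    rw [h1]
    have hGpos : 0 < Real.exp (θ * X i ω - c * V (i+1) ω) := Real.exp_pos _
    have step1 : (μ[fun ω => Real.exp (θ * (X (i+1) ω - X i ω))|ℱ i]) ω ≤
        1 + c * (μ[fun ω' => (X (i+1) ω' - X i ω')^2|ℱ i]) ω := by
      have h4' : (μ[fun ω' => X (i+1) ω' - X i ω'|ℱ i]) ω = 0 := by simpa using h4
      calc (μ[fun ω => Real.exp (θ * (X (i+1) ω - X i ω))|ℱ i]) ω ≤
          1 + θ * (μ[fun ω' => X (i+1) ω' - X i ω'|ℱ i]) ω +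
            c * (μ[fun ω' => (X (i+1) ω' - X i ω')^2|ℱ i]) ω := h2.trans_eq h3
      _ = 1 + c * (μ[fun ω' => (X (i+1) ω' - X i ω')^2|ℱ i]) ω := by rw [h4']; ring
    have step2 : 1 + c * (μ[fun ω' => (X (i+1) ω' - X i ω')^2|ℱ i]) ω ≤
        Real.exp (c * (μ[fun ω' => (X (i+1) ω' - X i ω')^2|ℱ i]) ω) := by
      have := Real.add_one_le_exp (c * (μ[fun ω' => (X (i+1) ω' - X i ω')^2|ℱ i]) ω)
      linarith
    calc (fun ω => Real.exp (θ * X i ω - c * V (i+1) ω)) ω *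
          (μ[fun ω => Real.exp (θ * (X (i+1) ω - X i ω))|ℱ i]) ω
        ≤ Real.exp (θ * X i ω - c * V (i+1) ω) *
          Real.exp (c * (μ[fun ω' => (X (i+1) ω' - X i ω')^2|ℱ i]) ω) := by
          exact mul_le_mul_of_nonneg_left (step1.trans step2) hGpos.le
    _ = Real.exp (θ * X i ω - c * V i ω) := by
        rw [← Real.exp_add]
        congr 1
        rw [hVsucc ω]
        ring
    _ = S i ω := rfl
  -- hitting sets
  set A : ℕ → Set Ω := fun j => {ω | (∀ k ∈ Icc 1 (j-1), X k ω ≤ l) ∧ l < X j ω} with hA_def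
  set B : ℕ → Set Ω := fun i => {ω | ∀ k ∈ Icc 1 i, X k ω ≤ l} with hB_def
  have hBmeasF : ∀ i, i ≤ n → MeasurableSet[ℱ i] (B i) := by
    intro i hi
    have he : B i = ⋂ k ∈ (Icc 1 i : Finset ℕ), {ω | X k ω ≤ l} := by
      ext ω; simp [hB_def]
    rw [he]
    apply MeasurableSet.biInter (Finset.countable_toSet _)
    intro k hk
    have hk' : k ≤ i := (Set.mem_Icc.1 (by simpa using hk)).2
    exact measurableSet_le ((hadapted k (le_trans hk' hi)).le (ℱ.mono hk')) measurable_const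
  have hBmeas0 : ∀ i, i ≤ n → MeasurableSet (B i) := fun i hi => (ℱ.le i) _ (hBmeasF i hi)
  have hAmeas : ∀ j, j ∈ Icc 1 n → MeasurableSet (A j) := by
    intro j hj
    simp only [mem_Icc] at hj
    have h1 : A j = B (j-1) ∩ {ω | l < X j ω} := by
      ext ω; simp [hA_def, hB_def, and_comm]
    rw [h1]
    exact (hBmeas0 (j-1) (by omega)).inter
      (measurableSet_lt measurable_const ((hadapted j hj.2).le (ℱ.le j)))
  have hsplit : ∀ i, B i = A (i+1) ∪ B (i+1) := by
    intro i
    ext ω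
    simp only [hA_def, hB_def, Set.mem_setOf_eq, Set.mem_union, Nat.add_sub_cancel]
    constructor
    · intro h
      by_cases hX' : l < X (i+1) ω
      · left; exact ⟨h, hX'⟩
      · right; intro k hk
        rcases mem_Icc.1 hk with ⟨hk1, hk2⟩
        rcases Nat.lt_or_ge k (i+1) with h' | h'
        · exact h k (mem_Icc.2 ⟨hk1, by omega⟩)
        · have hke : k = i+1 := by omega
          rw [hke]; exact le_of_not_gt hX'
    · rintro (⟨h1, _⟩ | h1)
      · exact h1
      · intro k hk
        rcases mem_Icc.1 hk with ⟨ha1, ha2⟩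
        exact h1 k (mem_Icc.2 ⟨ha1, by omega⟩)
  have hdisj : ∀ i, Disjoint (A (i+1)) (B (i+1)) := by
    intro i
    rw [Set.disjoint_left]
    rintro ω ⟨_, h2⟩ hB
    exact absurd (hB (i+1) (mem_Icc.2 ⟨by omega, le_rfl⟩)) (not_le.2 h2)
  -- key induction
  have hkey : ∀ i, i ≤ n → (∑ j ∈ Icc 1 i, ∫ ω in A j, S j ω ∂μ) + ∫ ω in B i, S i ω ∂μ ≤ 1 := by
    intro i
    induction i with
    | zero =>
      intro _
      have hB0 : B 0 = Set.univ := by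
        ext ω
        simp only [hB_def, Set.mem_setOf_eq, Set.mem_univ, iff_true]
        intro k hk
        rcases mem_Icc.1 hk with ⟨h1, h2⟩
        omega
      rw [show (Icc 1 0 : Finset ℕ) = ∅ from rfl, Finset.sum_empty, hB0, Measure.restrict_univ]
      have hone : ∫ ω, S 0 ω ∂μ = ∫ _ω, (1:ℝ) ∂μ :=
        integral_congr_ae (Filter.Eventually.of_forall fun ω => by rw [hS0])
      rw [zero_add, hone, integral_const]
      simp
    | succ k ih =>
      intro hk1
      have hk' : k ≤ n := by omega
      have e1 : ∑ j ∈ Icc 1 (k+1), ∫ ω in A j, S j ω ∂μ =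
          (∑ j ∈ Icc 1 k, ∫ ω in A j, S j ω ∂μ) + ∫ ω in A (k+1), S (k+1) ω ∂μ := by
        rw [← Finset.insert_Icc_right_eq_Icc_add_one (by omega : 1 ≤ k+1), Finset.sum_insert (by simp)]
        ring
      have e2 : ∫ ω in A (k+1), S (k+1) ω ∂μ + ∫ ω in B (k+1), S (k+1) ω ∂μ =
          ∫ ω in B k, S (k+1) ω ∂μ := by
        rw [hsplit k]
        exact (setIntegral_union (hdisj k) (hBmeas0 (k+1) hk1)
          ((hSint (k+1) hk1).integrableOn) ((hSint (k+1) hk1).integrableOn)).symm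
      have e3 : ∫ ω in B k, S (k+1) ω ∂μ ≤ ∫ ω in B k, S k ω ∂μ := by
        have h1 : ∫ ω in B k, S (k+1) ω ∂μ = ∫ ω in B k, (μ[S (k+1)|ℱ k]) ω ∂μ :=
          (setIntegral_condExp (ℱ.le k) (hSint (k+1) hk1) (hBmeasF k hk')).symm
        rw [h1]
        exact setIntegral_mono_ae integrable_condExp.integrableOn
          ((hSint k hk').integrableOn) (hstep k hk1)
      have h4 := ih hk'
      linarith
  -- lower bound on each piece
  have hAj : ∀ j, j ∈ Icc 1 n →
      (μ (A j)).toReal * Real.exp (θ * l - c * σ2) ≤ ∫ ω in A j, S j ω ∂μ := by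
    intro j hj
    have hj' := mem_Icc.1 hj
    have h1 : ∫ ω in A j, (fun _ : Ω => Real.exp (θ * l - c * σ2)) ω ∂μ =
        (μ (A j)).toReal * Real.exp (θ * l - c * σ2) := by
      rw [setIntegral_const, smul_eq_mul, measureReal_def]
    rw [← h1]
    apply setIntegral_mono_on_ae
      (integrableOn_const (measure_ne_top μ _))
      ((hSint j hj'.2).integrableOn) (hAmeas j hj)
    filter_upwards [hvar j hj] with ω hv hmem
    have hv' : V j ω ≤ σ2 := hv
    have hXj : l < X j ω := hmem.2
    show Real.exp (θ * l - c * σ2) ≤ Real.exp (θ * X j ω - c * V j ω)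
    apply Real.exp_le_exp.2
    nlinarith [mul_le_mul_of_nonneg_left hv' hc]
  -- cover the event by the A j
  have hcover : {ω | ∃ i ∈ Icc 1 n, l < X i ω} ⊆ ⋃ j ∈ (Icc 1 n : Finset ℕ), A j := by
    intro ω hω
    rcases hω with ⟨i, hi, hXi⟩
    have hP : ∃ m : ℕ, m ∈ Icc 1 n ∧ l < X m ω := ⟨i, hi, hXi⟩
    have hm := Nat.find_spec hP
    have hm1 := mem_Icc.1 hm.1
    refine Set.mem_biUnion hm.1 ?_
    refine ⟨?_, hm.2⟩
    intro k hk
    rcases mem_Icc.1 hk with ⟨hk1, hk2⟩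
    by_contra hc'
    push_neg at hc'
    have hkP : k ∈ Icc 1 n ∧ l < X k ω := ⟨mem_Icc.2 ⟨hk1, by omega⟩, hc'⟩
    exact Nat.find_min hP (show k < Nat.find hP by omega) hkP
  have hsum_le : ∑ j ∈ Icc 1 n, ∫ ω in A j, S j ω ∂μ ≤ 1 := by
    have hk := hkey n le_rfl
    have h0 : 0 ≤ ∫ ω in B n, S n ω ∂μ :=
      setIntegral_nonneg (hBmeas0 n le_rfl) fun ω _ => (hSpos n ω).le
    linarith
  have hexp_eq : θ * l - c * σ2 = (l ^ 2 / 2) / (σ2 + M * l / 3) := by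
    rw [hc_def, hθ_def]
    have h1 : 1 - l / (σ2 + M * l / 3) * M / 3 = σ2 / (σ2 + M * l / 3) := by
      field_simp
      ring
    rw [h1]
    field_simp
    ring
  calc μ {ω | ∃ i ∈ Icc 1 n, l < X i ω} ≤ μ (⋃ j ∈ (Icc 1 n : Finset ℕ), A j) :=
      measure_mono hcover
  _ ≤ ∑ j ∈ Icc 1 n, μ (A j) := measure_biUnion_finset_le _ _
  _ ≤ ENNReal.ofReal (Real.exp (-(l ^ 2 / 2) / (σ2 + M * l / 3))) := by
    have h1 : ∀ j ∈ (Icc 1 n : Finset ℕ), μ (A j) = ENNReal.ofReal ((μ (A j)).toReal) :=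
      fun j _ => (ENNReal.ofReal_toReal (measure_ne_top μ _)).symm
    rw [Finset.sum_congr rfl h1, ← ENNReal.ofReal_sum_of_nonneg
      (fun j _ => ENNReal.toReal_nonneg)]
    apply ENNReal.ofReal_le_ofReal
    have hE : (0:ℝ) < Real.exp (θ * l - c * σ2) := Real.exp_pos _
    have h2 : ∑ j ∈ Icc 1 n, (μ (A j)).toReal ≤
        Real.exp (-(θ * l - c * σ2)) * ∑ j ∈ Icc 1 n, ∫ ω in A j, S j ω ∂μ := by
      rw [Finset.mul_sum]
      apply Finset.sum_le_sum
      intro j hj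
      have h4 := mul_le_mul_of_nonneg_right (hAj j hj)
        (Real.exp_pos (-(θ * l - c * σ2))).le
      rw [mul_assoc, ← Real.exp_add] at h4
      simp only [add_neg_cancel, Real.exp_zero, mul_one] at h4
      calc (μ (A j)).toReal ≤ (∫ ω in A j, S j ω ∂μ) * Real.exp (-(θ * l - c * σ2)) := h4
      _ = Real.exp (-(θ * l - c * σ2)) * ∫ ω in A j, S j ω ∂μ := mul_comm _ _
    calc ∑ j ∈ Icc 1 n, (μ (A j)).toReal ≤
        Real.exp (-(θ * l - c * σ2)) * ∑ j ∈ Icc 1 n, ∫ ω in A j, S j ω ∂μ := h2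
    _ ≤ Real.exp (-(θ * l - c * σ2)) * 1 :=
        mul_le_mul_of_nonneg_left hsum_le (Real.exp_pos _).le
    _ = Real.exp (-(l ^ 2 / 2) / (σ2 + M * l / 3)) := by
        rw [mul_one, hexp_eq, neg_div]

/-- **Freedman's inequality.** Let `X 0, X 1, …, X n` be a real-valued martingale with respect
to the filtration `ℱ`, with `X 0 = 0`. If almost surely `|X i - X (i-1)| ≤ M` for `1 ≤ i ≤ n`
and the predictable quadratic variation `∑_{j=1}^i E[(X j - X (j-1))² | ℱ (j-1)]` is at most
`σ²` for every `1 ≤ i ≤ n`, then for every `l > 0`,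
`P(max_{i ∈ [n]} |X i| > l) ≤ 2·exp(-(l²/2)/(σ² + M·l/3))`. -/
theorem freedman_inequality
    (Ω : Type) (m0 : MeasurableSpace Ω) (μ : Measure Ω) [IsProbabilityMeasure μ]
    (n : ℕ) (ℱ : Filtration ℕ m0) (X : ℕ → Ω → ℝ) (M σ2 : ℝ)
    (hadapted : ∀ i ≤ n, Measurable[ℱ i] (X i))
    (hint : ∀ i ≤ n, Integrable (X i) μ)
    (hmart : ∀ i < n, μ[X (i + 1)|ℱ i] =ᵐ[μ] X i)
    (hX0 : ∀ ω, X 0 ω = 0)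
    (hM : 0 < M) (hσ2 : 0 < σ2)
    (hdiff : ∀ i ∈ Icc 1 n, ∀ᵐ ω ∂μ, |X i ω - X (i - 1) ω| ≤ M)
    (hvar : ∀ i ∈ Icc 1 n, ∀ᵐ ω ∂μ,
      (∑ j ∈ Icc 1 i, (μ[fun ω' => (X j ω' - X (j - 1) ω') ^ 2|ℱ (j - 1)]) ω) ≤ σ2)
    (l : ℝ) (hl : 0 < l) :
    μ {ω | ∃ i ∈ Icc 1 n, l < |X i ω|} ≤
      ENNReal.ofReal (2 * Real.exp (-(l ^ 2 / 2) / (σ2 + M * l / 3))) := by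
  have hpos := freedman_one_sided Ω m0 μ n ℱ X M σ2 hadapted hint hmart hX0 hM hσ2 hdiff hvar l hl
  have hneg : μ {ω | ∃ i ∈ Icc 1 n, l < -X i ω} ≤
      ENNReal.ofReal (Real.exp (-(l ^ 2 / 2) / (σ2 + M * l / 3))) := by
    have h := freedman_one_sided Ω m0 μ n ℱ (fun i ω => -X i ω) M σ2
      (fun i hi => (hadapted i hi).neg)
      (fun i hi => (hint i hi).neg)
      (fun i hi => by
        have h1 : μ[fun ω => -X (i+1) ω|ℱ i] =ᵐ[μ] -μ[X (i+1)|ℱ i] := condExp_neg (X (i+1)) (ℱ i)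
        filter_upwards [h1, hmart i hi] with ω hω1 hω2
        simp only [Pi.neg_apply] at hω1 ⊢
        rw [hω1, hω2])
      (fun ω => by simp [hX0])
      hM hσ2
      (fun i hi => by
        filter_upwards [hdiff i hi] with ω hω
        calc |-X i ω - -X (i - 1) ω| = |-(X i ω - X (i-1) ω)| := by ring_nf
        _ = |X i ω - X (i-1) ω| := abs_neg _
        _ ≤ M := hω)
      (fun i hi => by
        have he : ∀ j : ℕ, (fun ω' => (-X j ω' - -X (j-1) ω') ^ 2) =
            (fun ω' => (X j ω' - X (j-1) ω') ^ 2) := by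
          intro j; funext ω'; ring
        have h2 := hvar i hi
        filter_upwards [h2] with ω hω
        calc ∑ j ∈ Icc 1 i, (μ[fun ω' => (-X j ω' - -X (j-1) ω') ^ 2|ℱ (j-1)]) ω
            = ∑ j ∈ Icc 1 i, (μ[fun ω' => (X j ω' - X (j-1) ω') ^ 2|ℱ (j-1)]) ω := by
              apply Finset.sum_congr rfl
              intro j _
              rw [he j]
        _ ≤ σ2 := hω)
      l hl
    exact h
  have hsub : {ω | ∃ i ∈ Icc 1 n, l < |X i ω|} ⊆
      {ω | ∃ i ∈ Icc 1 n, l < X i ω} ∪ {ω | ∃ i ∈ Icc 1 n, l < -X i ω} := by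
    intro ω hω
    rcases hω with ⟨i, hi, habs⟩
    rcases lt_abs.1 habs with h | h
    · exact Or.inl ⟨i, hi, h⟩
    · exact Or.inr ⟨i, hi, h⟩
  calc μ {ω | ∃ i ∈ Icc 1 n, l < |X i ω|}
      ≤ μ ({ω | ∃ i ∈ Icc 1 n, l < X i ω} ∪ {ω | ∃ i ∈ Icc 1 n, l < -X i ω}) :=
        measure_mono hsub
  _ ≤ μ {ω | ∃ i ∈ Icc 1 n, l < X i ω} + μ {ω | ∃ i ∈ Icc 1 n, l < -X i ω} :=
        measure_union_le _ _
  _ ≤ ENNReal.ofReal (Real.exp (-(l ^ 2 / 2) / (σ2 + M * l / 3))) +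
        ENNReal.ofReal (Real.exp (-(l ^ 2 / 2) / (σ2 + M * l / 3))) := add_le_add hpos hneg
  _ = ENNReal.ofReal (2 * Real.exp (-(l ^ 2 / 2) / (σ2 + M * l / 3))) := by
        rw [← ENNReal.ofReal_add (Real.exp_pos _).le (Real.exp_pos _).le]
        congr 1
        ring
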